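/- Let V be a finite set with |V| = n ≥ 1 and let y_1, …, y_N (N ≥ 1) be lists, each a permutation of V. Let h^int be their intersection order. Then: (a) h^int is a partial order on V; (b) every y_j is a linear extension of h^int; and (c) for every partial order h on V with h ≠ h^int, ∏_{j=1}^N 1_{y_j ∈ L[h]} / |L[h]|^N < 1 / |L[h^int]|^N. Hence the intersection order is the unique maximizer, over all partial orders h on V, of the likelihood ∏_{j=1}^N 1_{y_j ∈ L[h]} / |L[h]| arising from the noise-free observation model in which each list is drawn uniformly at random from the linear extensions of h. -/

import Mathlib

/-- A (strict) partial order on `V`: an irreflexive transitive binary relation. -/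
def IsPartialOrderOn {V : Type*} (r : V → V → Prop) : Prop :=
  (∀ a, ¬ r a a) ∧ (∀ a b c, r a b → r b c → r a c)

/-- `l` is a linear extension of the partial order `r`: it enumerates `V` without
repetition and for `a < b` it is not the case that `l_b ≻ l_a`. -/
def IsLinext {V : Type*} (r : V → V → Prop) (l : List V) : Prop :=
  l.Nodup ∧ (∀ v : V, v ∈ l) ∧
    ∀ a b : Fin l.length, a < b → ¬ r (l.get b) (l.get a)

/-- `i` appears (strictly) before `j` in the list `l`. -/
def Before {V : Type*} [DecidableEq V] (l : List V) (i j : V) : Prop :=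
  l.idxOf i < l.idxOf j

open Classical

lemma linext_iff_before {V : Type*} [DecidableEq V] {r : V → V → Prop}
    (hr : IsPartialOrderOn r) {l : List V} (hnd : l.Nodup) (hmem : ∀ v : V, v ∈ l) :
    IsLinext r l ↔ ∀ i j : V, r i j → Before l i j := by
  constructor
  · rintro ⟨-, -, h3⟩ i j hij
    have hne : i ≠ j := fun h => hr.1 i (h ▸ hij)
    have hi : l.idxOf i < l.length := List.idxOf_lt_length_iff.2 (hmem i)
    have hj : l.idxOf j < l.length := List.idxOf_lt_length_iff.2 (hmem j)
    rcases lt_trichotomy (l.idxOf i) (l.idxOf j) with h | h | h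
    · exact h
    · exact absurd (by
        have hfin : (⟨l.idxOf i, hi⟩ : Fin l.length) = ⟨l.idxOf j, hj⟩ := Fin.ext h
        have e1 : l.get ⟨l.idxOf i, hi⟩ = i := List.getElem_idxOf hi
        have e2 : l.get ⟨l.idxOf j, hj⟩ = j := List.getElem_idxOf hj
        rw [← e1, ← e2, hfin]) hne
    · exfalso
      apply h3 ⟨l.idxOf j, hj⟩ ⟨l.idxOf i, hi⟩ h
      simp only [List.get_eq_getElem, List.getElem_idxOf hi, List.getElem_idxOf hj]
      exact hij
  · intro h
    refine ⟨hnd, hmem, fun a b hab hr' => ?_⟩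
    have := h _ _ hr'
    unfold Before at this
    simp only [List.get_eq_getElem, List.Nodup.idxOf_getElem hnd] at this
    exact absurd (this.trans hab) (lt_irrefl _)

lemma exists_linext {V : Type*} [Fintype V] [DecidableEq V] {r : V → V → Prop}
    (hr : IsPartialOrderOn r) : ∃ l : List V, IsLinext r l := by
  classical
  let rle : V → V → Prop := fun a b => a = b ∨ r a b
  have : IsPartialOrder V rle := by
    refine { refl := ?_, trans := ?_, antisymm := ?_ }
    · exact fun a => Or.inl rfl
    · rintro a b c (rfl | hab) (rfl | hbc)
      · exact Or.inl rfl
      · exact Or.inr hbc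
      · exact Or.inr hab
      · exact Or.inr (hr.2 _ _ _ hab hbc)
    · rintro a b (rfl | hab) (h | hba)
      · rfl
      · rfl
      · exact h.symm
      · exact absurd (hr.2 _ _ _ hab hba) (hr.1 a)
  obtain ⟨s, hs, hrs⟩ := extend_partialOrder rle
  haveI : IsLinearOrder V s := hs
  haveI : DecidableRel s := fun a b => Classical.dec _
  refine ⟨Finset.univ.sort s, ?_⟩
  have hnd := Finset.sort_nodup Finset.univ s
  have hmem : ∀ v : V, v ∈ Finset.univ.sort s := fun v =>
    (Finset.mem_sort s).2 (Finset.mem_univ v)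
  refine ⟨hnd, hmem, fun a b hab hrab => ?_⟩
  have hsort : List.Pairwise s (Finset.univ.sort s) := Finset.pairwise_sort Finset.univ s
  have h1 : s ((Finset.univ.sort s).get a) ((Finset.univ.sort s).get b) :=
    hsort.rel_get_of_lt hab
  have h2 : s ((Finset.univ.sort s).get b) ((Finset.univ.sort s).get a) :=
    hrs _ _ (Or.inr hrab)
  have heq := antisymm h1 h2
  have : a = b := by
    apply Fin.ext
    have := (List.Nodup.get_inj_iff hnd).1 heq
    exact congrArg Fin.val this
  exact absurd (this ▸ hab) (lt_irrefl _)

lemma exists_linext_before {V : Type*} [Fintype V] [DecidableEq V] {r : V → V → Prop}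
    (hr : IsPartialOrderOn r) {a b : V} (hab : ¬ r a b) (hne : a ≠ b) :
    ∃ l : List V, IsLinext r l ∧ Before l b a := by
  classical
  let r' : V → V → Prop := fun x z => r x z ∨ ((r x b ∨ x = b) ∧ (r a z ∨ a = z))
  have hr' : IsPartialOrderOn r' := by
    constructor
    · rintro x (hx | ⟨(hxb | rfl), (hax | rfl)⟩)
      · exact hr.1 x hx
      · exact hab (hr.2 _ _ _ hax hxb)
      · exact hab hxb
      · exact hab hax
      · exact hne rfl
    · rintro x z w (hxz | ⟨hxb, haz⟩) (hzw | ⟨hzb, haw⟩)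
      · exact Or.inl (hr.2 _ _ _ hxz hzw)
      · refine Or.inr ⟨?_, haw⟩
        rcases hzb with hzb | rfl
        · exact Or.inl (hr.2 _ _ _ hxz hzb)
        · exact Or.inl hxz
      · refine Or.inr ⟨hxb, ?_⟩
        rcases haz with haz | rfl
        · exact Or.inl (hr.2 _ _ _ haz hzw)
        · exact Or.inl hzw
      · exfalso
        rcases haz with haz | rfl <;> rcases hzb with hzb | rfl
        · exact hab (hr.2 _ _ _ haz hzb)
        · exact hab haz
        · exact hab hzb
        · exact hne rfl
  obtain ⟨l, hl⟩ := exists_linext hr'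
  refine ⟨l, ?_, ?_⟩
  · exact ⟨hl.1, hl.2.1, fun i j hij h => hl.2.2 i j hij (Or.inl h)⟩
  · exact ((linext_iff_before hr' hl.1 hl.2.1).1 hl) b a
      (Or.inr ⟨Or.inr rfl, Or.inr rfl⟩)

lemma linext_finite {V : Type*} [Fintype V] [DecidableEq V] (r : V → V → Prop) :
    {l : List V | IsLinext r l}.Finite := by
  apply Set.Finite.subset (List.finite_length_le V (Fintype.card V))
  intro l hl
  exact hl.1.length_le_card

/- **Statement 0.** The intersection order of the lists `y_1, …, y_N` is a partial order,
every `y_j` is a linear extension of it, and it is the unique maximizer of the noise-free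
likelihood `∏_j 1_{y_j ∈ L[h]} / |L[h]|^N` over all partial orders `h`. -/
open Classical in
theorem intersection_order_is_MLE
    {V : Type*} [Fintype V] [DecidableEq V] (n : ℕ) (hn : 1 ≤ n)
    (hcard : Fintype.card V = n)
    (N : ℕ) (hN : 1 ≤ N) (y : Fin N → List V)
    (hperm : ∀ j, (y j).Nodup ∧ ∀ v : V, v ∈ y j) :
    -- (a) the intersection order is a partial order on V
    IsPartialOrderOn (fun i j : V => ∀ k : Fin N, Before (y k) i j) ∧
    -- (b) every list y_j is a linear extension of the intersection order
    (∀ j : Fin N, IsLinext (fun i j : V => ∀ k : Fin N, Before (y k) i j) (y j)) ∧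
    -- (c) every other partial order has strictly smaller likelihood
    (∀ r : V → V → Prop, IsPartialOrderOn r →
      r ≠ (fun i j : V => ∀ k : Fin N, Before (y k) i j) →
      (∏ j : Fin N, (if IsLinext r (y j) then (1:ℝ) else 0)) /
          (({l : List V | IsLinext r l}.ncard : ℝ)) ^ N
        < 1 / (({l : List V |
            IsLinext (fun i j : V => ∀ k : Fin N, Before (y k) i j) l}.ncard : ℝ)) ^ N) := by
  set rint : V → V → Prop := fun i j : V => ∀ k : Fin N, Before (y k) i j with hrint
  have j0 : Fin N := ⟨0, hN⟩
  have hint : IsPartialOrderOn rint := by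
    constructor
    · intro a h
      exact lt_irrefl _ (h j0)
    · intro a b c h1 h2 k
      exact (h1 k).trans (h2 k)
  have hb : ∀ j : Fin N, IsLinext rint (y j) := by
    intro j
    exact (linext_iff_before hint (hperm j).1 (hperm j).2).2 (fun i j' h => h j)
  refine ⟨hint, hb, ?_⟩
  intro r hr hne
  have hfinI := linext_finite rint
  have hApos : 0 < {l : List V | IsLinext rint l}.ncard :=
    (Set.ncard_pos hfinI).2 ⟨y j0, hb j0⟩
  have hAposR : (0:ℝ) < ({l : List V | IsLinext rint l}.ncard : ℝ) := by
    exact_mod_cast hApos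
  by_cases hall : ∀ j : Fin N, IsLinext r (y j)
  · -- all lists are linear extensions of r : then L[rint] ⊊ L[r]
    have hsub : ∀ i j : V, r i j → rint i j := fun i j h k =>
      (linext_iff_before hr (hperm k).1 (hperm k).2).1 (hall k) i j h
    have hex : ∃ a b : V, rint a b ∧ ¬ r a b := by
      by_contra h
      push_neg at h
      apply hne
      funext a b
      exact propext ⟨hsub a b, h a b⟩
    obtain ⟨a, b, hiab, hnab⟩ := hex
    have hne' : a ≠ b := fun h => hint.1 a (h ▸ hiab)
    obtain ⟨l, hl, hlba⟩ := exists_linext_before hr hnab hne'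
    have hlnot : ¬ IsLinext rint l := by
      intro hli
      have := (linext_iff_before hint hl.1 hl.2.1).1 hli a b hiab
      exact lt_asymm this hlba
    have hss : {l : List V | IsLinext rint l} ⊂ {l : List V | IsLinext r l} := by
      constructor
      · intro l' hl'
        exact (linext_iff_before hr hl'.1 hl'.2.1).2
          (fun i j h => (linext_iff_before hint hl'.1 hl'.2.1).1 hl' i j (hsub i j h))
      · intro hsup
        exact hlnot (hsup hl)
    have hAB : {l : List V | IsLinext rint l}.ncard < {l : List V | IsLinext r l}.ncard :=
      Set.ncard_lt_ncard hss (linext_finite r)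
    have hprod : (∏ j : Fin N, (if IsLinext r (y j) then (1:ℝ) else 0)) = 1 := by
      simp [hall]
    rw [hprod]
    apply one_div_lt_one_div_of_lt
    · exact pow_pos hAposR N
    · apply pow_lt_pow_left₀ _ (le_of_lt hAposR) (Nat.one_le_iff_ne_zero.1 hN)
      exact_mod_cast hAB
  · push_neg at hall
    obtain ⟨j, hj⟩ := hall
    have hprod : (∏ j : Fin N, (if IsLinext r (y j) then (1:ℝ) else 0)) = 0 :=
      Finset.prod_eq_zero (Finset.mem_univ j) (if_neg hj)
    rw [hprod, zero_div]
    exact div_pos one_pos (pow_pos hAposR N)
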